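/- arXiv:1602.03140 — 4 statements merged into one kernel-verified Lean document; each statement's English description precedes it below -/
import Mathlib

section
/- Let n ∈ ℕ, let 𝒫₁,…,𝒫ₙ be sets of primes, and let f₁,…,fₙ : ℕ → ℝ be multiplicative functions satisfying: (1) fᵢ is multiplicative; (2) fᵢ takes values in ℝ_{>0}; (3) fᵢ(p^m) = fᵢ(p) for every prime p and every m ∈ ℕ; (4) fᵢ(p) < 1 for p ∈ 𝒫ᵢ; (5) fᵢ(p) = 1 for p ∉ 𝒫ᵢ. Define multiplicative functions f̂ᵢ : ℕ → ℝ by f̂ᵢ(k) = ∏_{p∣k}(1 − fᵢ(p)). Then for every k ∈ ℕⁿ with gcd(kᵢ,k_j) = 1 for all i ≠ j, one has Σ* λ⁻_{d₁⋯dₙ} ∏ᵢ f̂ᵢ(dᵢ) ≤ ∏ᵢ fᵢ(kᵢ) ≤ Σ* λ⁺_{d₁⋯dₙ} ∏ᵢ f̂ᵢ(dᵢ), where Σ* denotes the sum over n-tuples (d₁,…,dₙ) of squarefree positive integers with dᵢ ∣ kᵢ and every prime factor of dᵢ lying in 𝒫ᵢ. -/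
open scoped Classical

open Finset

lemma hn_squarefree_prod_primes : ∀ {S : Finset ℕ}, (∀ p ∈ S, p.Prime) →
    Squarefree (∏ p ∈ S, p) := by
  intro S
  induction S using Finset.induction_on with
  | empty => intro _; simpa using squarefree_one
  | @insert a S' ha ih =>
    intro h
    have hap : a.Prime := h a (mem_insert_self _ _)
    have hS' : ∀ p ∈ S', p.Prime := fun p hp => h p (mem_insert_of_mem hp)
    have hcop : Nat.Coprime a (∏ p ∈ S', p) := by
      rw [Nat.Prime.coprime_iff_not_dvd hap]
      intro hdvd
      obtain ⟨q, hq, hq2⟩ := hap.prime.exists_mem_finset_dvd hdvd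
      rw [Nat.prime_dvd_prime_iff_eq hap (hS' q hq)] at hq2
      exact ha (hq2 ▸ hq)
    rw [Finset.prod_insert ha]
    exact (Nat.squarefree_mul hcop).mpr ⟨hap.squarefree, ih hS'⟩

lemma hn_key_identity (g : ℕ → ℝ) (P : Finset ℕ) : ∀ (L : Finset ℕ → ℝ),
    ∑ S ∈ P.powerset, ((∏ p ∈ S, (1 - g p)) * ∏ p ∈ P \ S, g p) * (∑ T ∈ S.powerset, L T)
      = ∑ S ∈ P.powerset, L S * ∏ p ∈ S, (1 - g p) := by
  induction P using Finset.induction_on with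
  | empty => intro L; simp
  | @insert a P' ha ih =>
    intro L
    rw [Finset.sum_powerset_insert ha, Finset.sum_powerset_insert ha, ← Finset.sum_add_distrib]
    have step : ∀ S ∈ P'.powerset,
        ((∏ p ∈ S, (1 - g p)) * ∏ p ∈ insert a P' \ S, g p) * (∑ T ∈ S.powerset, L T)
          + ((∏ p ∈ insert a S, (1 - g p)) * ∏ p ∈ insert a P' \ insert a S, g p) *
            (∑ T ∈ (insert a S).powerset, L T)
        = ((∏ p ∈ S, (1 - g p)) * ∏ p ∈ P' \ S, g p) * (∑ T ∈ S.powerset, L T)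
          + (1 - g a) * (((∏ p ∈ S, (1 - g p)) * ∏ p ∈ P' \ S, g p) *
             (∑ T ∈ S.powerset, L (insert a T))) := by
      intro S hS
      rw [Finset.mem_powerset] at hS
      have haS : a ∉ S := fun h => ha (hS h)
      have h1 : insert a P' \ S = insert a (P' \ S) := Finset.insert_sdiff_of_notMem _ haS
      have h2 : insert a P' \ insert a S = P' \ S := by
        ext x
        simp only [Finset.mem_sdiff, Finset.mem_insert, not_or]
        constructor
        · rintro ⟨(rfl | hx), hxa, hxS⟩
          · exact absurd rfl hxa
          · exact ⟨hx, hxS⟩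
        · rintro ⟨hx, hxS⟩
          exact ⟨Or.inr hx, fun hxa => ha (hxa ▸ hx), hxS⟩
      have h3 : a ∉ P' \ S := fun h => ha (Finset.mem_sdiff.mp h).1
      rw [h1, h2, Finset.prod_insert h3, Finset.prod_insert haS,
        Finset.sum_powerset_insert haS]
      ring
    rw [Finset.sum_congr rfl step, Finset.sum_add_distrib, ← Finset.mul_sum, ih L,
      ih (fun T => L (insert a T))]
    have step2 : ∀ S ∈ P'.powerset,
        L (insert a S) * ∏ p ∈ insert a S, (1 - g p)
          = (1 - g a) * (L (insert a S) * ∏ p ∈ S, (1 - g p)) := by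
      intro S hS
      rw [Finset.mem_powerset] at hS
      have haS : a ∉ S := fun h => ha (hS h)
      rw [Finset.prod_insert haS]; ring
    rw [Finset.sum_congr rfl step2, ← Finset.mul_sum]

lemma hn_sum_divisors_prod_primes {S : Finset ℕ} (hS : ∀ p ∈ S, p.Prime) (F : ℕ → ℝ) :
    ∑ T ∈ S.powerset, F (∏ p ∈ T, p) = ∑ d ∈ (∏ p ∈ S, p).divisors, F d := by
  have hne : (∏ p ∈ S, p) ≠ 0 := by
    refine Finset.prod_ne_zero_iff.mpr fun p hp => (hS p hp).pos.ne'
  have hsq : Squarefree (∏ p ∈ S, p) := hn_squarefree_prod_primes hS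
  refine Finset.sum_nbij' (fun T => ∏ p ∈ T, p) (fun d => S.filter (· ∣ d)) ?_ ?_ ?_ ?_ ?_
  · intro T hT
    rw [Finset.mem_powerset] at hT
    exact Nat.mem_divisors.mpr ⟨Finset.prod_dvd_prod_of_subset _ _ _ hT, hne⟩
  · intro d _
    exact Finset.mem_powerset.mpr (Finset.filter_subset _ _)
  · intro T hT
    rw [Finset.mem_powerset] at hT
    ext p
    simp only [Finset.mem_filter]
    constructor
    · rintro ⟨hpS, hpd⟩
      obtain ⟨q, hq, hq2⟩ := (hS p hpS).prime.exists_mem_finset_dvd hpd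
      rw [Nat.prime_dvd_prime_iff_eq (hS p hpS) (hS q (hT hq))] at hq2
      exact hq2 ▸ hq
    · intro hp
      exact ⟨hT hp, Finset.dvd_prod_of_mem _ hp⟩
  · intro d hd
    rw [Nat.mem_divisors] at hd
    have hdsq : Squarefree d := hsq.squarefree_of_dvd hd.1
    have hdne : d ≠ 0 := hdsq.ne_zero
    have : S.filter (· ∣ d) = d.primeFactors := by
      ext p
      simp only [Finset.mem_filter, Nat.mem_primeFactors]
      constructor
      · rintro ⟨hpS, hpd⟩; exact ⟨hS p hpS, hpd, hdne⟩
      · rintro ⟨hp, hpd, -⟩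
        refine ⟨?_, hpd⟩
        obtain ⟨q, hq, hq2⟩ := hp.prime.exists_mem_finset_dvd (hpd.trans hd.1)
        rw [Nat.prime_dvd_prime_iff_eq hp (hS q hq)] at hq2
        exact hq2 ▸ hq
    show ∏ p ∈ S.filter (· ∣ d), p = d
    rw [this, Nat.prod_primeFactors_of_squarefree hdsq]
  · intro T _; rfl

lemma hn_core (lam : ℕ → ℝ) (g : ℕ → ℝ) (P : Finset ℕ)
    (hP : ∀ p ∈ P, p.Prime) (hg0 : ∀ p ∈ P, 0 ≤ g p) (hg1 : ∀ p ∈ P, g p ≤ 1)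
    (hnn : ∀ N : ℕ, 1 < N → 0 ≤ ∑ d ∈ N.divisors, lam d) :
    lam 1 * ∏ p ∈ P, g p ≤ ∑ S ∈ P.powerset, lam (∏ p ∈ S, p) * ∏ p ∈ S, (1 - g p) := by
  rw [← hn_key_identity g P (fun T => lam (∏ p ∈ T, p))]
  have h0 : (∅ : Finset ℕ) ∈ P.powerset := Finset.empty_mem_powerset P
  rw [← Finset.add_sum_erase _ _ h0]
  have he : ((∏ p ∈ (∅ : Finset ℕ), (1 - g p)) * ∏ p ∈ P \ ∅, g p) *
      (∑ T ∈ (∅ : Finset ℕ).powerset, lam (∏ p ∈ T, p)) = lam 1 * ∏ p ∈ P, g p := by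
    simp [mul_comm]
  rw [he]
  refine le_add_of_nonneg_right (Finset.sum_nonneg fun S hS => ?_)
  rw [Finset.mem_erase, Finset.mem_powerset] at hS
  obtain ⟨hSne, hSP⟩ := hS
  have hSpr : ∀ p ∈ S, p.Prime := fun p hp => hP p (hSP hp)
  have h1 : (1 : ℕ) < ∏ p ∈ S, p := by
    obtain ⟨p, hp⟩ := Finset.nonempty_iff_ne_empty.mpr hSne
    have hne : (∏ p ∈ S, p) ≠ 0 := Finset.prod_ne_zero_iff.mpr fun q hq => (hSpr q hq).pos.ne'
    exact lt_of_lt_of_le (hSpr p hp).one_lt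
      (Nat.le_of_dvd (Nat.pos_of_ne_zero hne) (Finset.dvd_prod_of_mem _ hp))
  refine mul_nonneg (mul_nonneg (Finset.prod_nonneg fun p hp => ?_)
    (Finset.prod_nonneg fun p hp => hg0 p (Finset.mem_sdiff.mp hp).1)) ?_
  · have := hg1 p (hSP hp); linarith
  · rw [hn_sum_divisors_prod_primes hSpr]
    exact hnn _ h1

/-- Hooley neutralisers. Given upper/lower sieve weights `λ±`,
sets of primes `Ppᵢ` and multiplicative functions `fᵢ` as in the hypotheses,
for pairwise coprime `k₁, …, kₙ` the product `∏ fᵢ(kᵢ)` is squeezed between the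
neutralised sums over squarefree `dᵢ ∣ kᵢ` supported on primes of `Ppᵢ`. -/
theorem hooley_neutraliser (n : ℕ)
    (lamMinus lamPlus : ℕ → ℝ)
    (hlam1m : lamMinus 1 = 1) (hlam1p : lamPlus 1 = 1)
    (hsieve : ∀ N : ℕ, 1 < N →
      (∑ d ∈ N.divisors, lamMinus d) ≤ 0 ∧ 0 ≤ ∑ d ∈ N.divisors, lamPlus d)
    (Pp : Fin n → Set ℕ) (hPp : ∀ i, ∀ p ∈ Pp i, Nat.Prime p)
    (f : Fin n → ℕ → ℝ)
    (hone : ∀ i, f i 1 = 1)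
    (hmul : ∀ i a b, 0 < a → 0 < b → Nat.Coprime a b → f i (a * b) = f i a * f i b)
    (hpos : ∀ i k, 0 < k → 0 < f i k)
    (hpp : ∀ i (p m : ℕ), p.Prime → 1 ≤ m → f i (p ^ m) = f i p)
    (hin : ∀ i p, p ∈ Pp i → f i p < 1)
    (hout : ∀ i p, p.Prime → p ∉ Pp i → f i p = 1)
    (k : Fin n → ℕ) (hk : ∀ i, 0 < k i)
    (hcop : ∀ i j, i ≠ j → Nat.Coprime (k i) (k j)) :
    (∑ d ∈ (Fintype.piFinset fun i => (k i).divisors).filter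
        (fun d => ∀ i, Squarefree (d i) ∧ ∀ p ∈ (d i).primeFactors, p ∈ Pp i),
        lamMinus (∏ i, d i) * ∏ i, ∏ p ∈ (d i).primeFactors, (1 - f i p))
      ≤ ∏ i, f i (k i) ∧
    (∏ i, f i (k i)) ≤
      ∑ d ∈ (Fintype.piFinset fun i => (k i).divisors).filter
        (fun d => ∀ i, Squarefree (d i) ∧ ∀ p ∈ (d i).primeFactors, p ∈ Pp i),
        lamPlus (∏ i, d i) * ∏ i, ∏ p ∈ (d i).primeFactors, (1 - f i p) := by
  classical
  set Pi : Fin n → Finset ℕ := fun i => (k i).primeFactors.filter (· ∈ Pp i) with hPidef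
  have hPiprime : ∀ i, ∀ p ∈ Pi i, p.Prime := fun i p hp =>
    Nat.prime_of_mem_primeFactors (Finset.mem_filter.mp hp).1
  have hPiPp : ∀ i, ∀ p ∈ Pi i, p ∈ Pp i := fun i p hp => (Finset.mem_filter.mp hp).2
  have hPidvd : ∀ i, ∀ p ∈ Pi i, p ∣ k i := fun i p hp =>
    Nat.dvd_of_mem_primeFactors (Finset.mem_filter.mp hp).1
  have hdvdne : ∀ (p : ℕ) i j, p.Prime → p ∣ k i → p ∣ k j → i ≠ j → False := by
    intro p i j hp hpi hpj hij
    exact hp.ne_one (Nat.dvd_one.mp ((hcop i j hij) ▸ Nat.dvd_gcd hpi hpj))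
  have hdisj : ∀ i j, i ≠ j → Disjoint (Pi i) (Pi j) := by
    intro i j hij
    rw [Finset.disjoint_left]
    intro p hpi hpj
    exact hdvdne p i j (hPiprime i p hpi) (hPidvd i p hpi) (hPidvd j p hpj) hij
  set P : Finset ℕ := Finset.univ.biUnion Pi with hPdef
  set g : ℕ → ℝ := fun p => if h : ∃ i, p ∈ Pi i then f h.choose p else 1 with hgdef
  have hg : ∀ i p, p ∈ Pi i → g p = f i p := by
    intro i p hp
    have hex : ∃ j, p ∈ Pi j := ⟨i, hp⟩
    rw [hgdef]
    simp only [dif_pos hex]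
    rcases eq_or_ne hex.choose i with h | h
    · rw [h]
    · exact absurd hp (Finset.disjoint_left.mp (hdisj _ _ h) hex.choose_spec)
  have hPmem : ∀ p ∈ P, ∃ i, p ∈ Pi i := by
    intro p hp
    rw [hPdef, Finset.mem_biUnion] at hp
    obtain ⟨i, _, hi⟩ := hp
    exact ⟨i, hi⟩
  have hPprime : ∀ p ∈ P, p.Prime := by
    intro p hp
    obtain ⟨i, hi⟩ := hPmem p hp
    exact hPiprime i p hi
  have hg0 : ∀ p ∈ P, 0 ≤ g p := by
    intro p hp
    obtain ⟨i, hi⟩ := hPmem p hp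
    rw [hg i p hi]
    exact (hpos i p (hPiprime i p hi).pos).le
  have hg1 : ∀ p ∈ P, g p ≤ 1 := by
    intro p hp
    obtain ⟨i, hi⟩ := hPmem p hp
    rw [hg i p hi]
    exact (hin i p (hPiPp i p hi)).le
  have hpw : (↑(Finset.univ : Finset (Fin n)) : Set (Fin n)).PairwiseDisjoint Pi :=
    fun i _ j _ hij => hdisj i j hij
  have hfk : ∀ i, f i (k i) = ∏ p ∈ Pi i, f i p := by
    intro i
    have hmul' : ∀ x y : ℕ, Nat.Coprime x y → f i (x * y) = f i x * f i y := by
      intro x y hxy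
      rcases Nat.eq_zero_or_pos x with rfl | hx
      · rw [Nat.coprime_zero_left] at hxy; subst hxy; simp [hone i]
      rcases Nat.eq_zero_or_pos y with rfl | hy
      · rw [Nat.coprime_zero_right] at hxy; subst hxy; simp [hone i]
      exact hmul i x y hx hy hxy
    have h1 := Nat.multiplicative_factorization (f i) hmul' (hone i) (hk i).ne'
    rw [Finsupp.prod, Nat.support_factorization] at h1
    have h2 : ∀ p ∈ (k i).primeFactors, f i (p ^ (k i).factorization p) = f i p := by
      intro p hp
      have hppr := Nat.prime_of_mem_primeFactors hp
      exact hpp i p _ hppr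
        (hppr.factorization_pos_of_dvd (hk i).ne' (Nat.dvd_of_mem_primeFactors hp))
    rw [Finset.prod_congr rfl h2] at h1
    rw [h1, ← Finset.prod_filter_mul_prod_filter_not (k i).primeFactors (· ∈ Pp i)]
    have h3 : ∏ p ∈ (k i).primeFactors.filter (fun p => ¬p ∈ Pp i), f i p = 1 :=
      Finset.prod_eq_one fun p hp =>
        hout i p (Nat.prime_of_mem_primeFactors (Finset.mem_filter.mp hp).1)
          (Finset.mem_filter.mp hp).2
    rw [h3, mul_one]
  have hprodP : ∏ p ∈ P, g p = ∏ i, f i (k i) := by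
    rw [hPdef, Finset.prod_biUnion hpw]
    refine Finset.prod_congr rfl fun i _ => ?_
    rw [hfk i]
    exact Finset.prod_congr rfl fun p hp => hg i p hp
  -- the reindexing of the sum
  have reindex : ∀ lam : ℕ → ℝ,
      (∑ d ∈ (Fintype.piFinset fun i => (k i).divisors).filter
        (fun d => ∀ i, Squarefree (d i) ∧ ∀ p ∈ (d i).primeFactors, p ∈ Pp i),
        lam (∏ i, d i) * ∏ i, ∏ p ∈ (d i).primeFactors, (1 - f i p))
      = ∑ S ∈ P.powerset, lam (∏ p ∈ S, p) * ∏ p ∈ S, (1 - g p) := by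
    intro lam
    have hA : ∀ d : Fin n → ℕ, d ∈ (Fintype.piFinset fun i => (k i).divisors).filter
        (fun d => ∀ i, Squarefree (d i) ∧ ∀ p ∈ (d i).primeFactors, p ∈ Pp i) ↔
        (∀ i, d i ∈ (k i).divisors) ∧
          (∀ i, Squarefree (d i) ∧ ∀ p ∈ (d i).primeFactors, p ∈ Pp i) := by
      intro d
      rw [Finset.mem_filter, Fintype.mem_piFinset]
    have hsub : ∀ d : Fin n → ℕ, ((∀ i, d i ∈ (k i).divisors) ∧
        (∀ i, Squarefree (d i) ∧ ∀ p ∈ (d i).primeFactors, p ∈ Pp i)) →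
        ∀ i, (d i).primeFactors ⊆ Pi i := by
      rintro d ⟨hd1, hd2⟩ i p hp
      have hppr := Nat.prime_of_mem_primeFactors hp
      have hdvd : p ∣ k i := (Nat.dvd_of_mem_primeFactors hp).trans
        (Nat.mem_divisors.mp (hd1 i)).1
      rw [hPidef]
      exact Finset.mem_filter.mpr
        ⟨Nat.mem_primeFactors.mpr ⟨hppr, hdvd, (hk i).ne'⟩, (hd2 i).2 p hp⟩
    refine Finset.sum_nbij' (fun d => Finset.univ.biUnion fun i => (d i).primeFactors)
      (fun S => fun i => ∏ p ∈ S ∩ Pi i, p) ?_ ?_ ?_ ?_ ?_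
    · intro d hd
      rw [hA] at hd
      rw [Finset.mem_powerset]
      intro p hp
      rw [Finset.mem_biUnion] at hp
      obtain ⟨i, _, hi⟩ := hp
      rw [hPdef, Finset.mem_biUnion]
      exact ⟨i, Finset.mem_univ i, hsub d hd i hi⟩
    · intro S hS
      rw [Finset.mem_powerset] at hS
      rw [hA]
      have hpr : ∀ i, ∀ p ∈ S ∩ Pi i, p.Prime :=
        fun i p hp => hPiprime i p (Finset.mem_inter.mp hp).2
      have hpf : ∀ i, (∏ p ∈ S ∩ Pi i, p).primeFactors = S ∩ Pi i :=
        fun i => Nat.primeFactors_prod (hpr i)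
      refine ⟨fun i => ?_, fun i => ?_⟩
      · refine Nat.mem_divisors.mpr ⟨?_, (hk i).ne'⟩
        refine Finset.prod_primes_dvd _ (fun p hp => (hpr i p hp).prime) ?_
        exact fun p hp => hPidvd i p (Finset.mem_inter.mp hp).2
      · refine ⟨hn_squarefree_prod_primes (hpr i), fun p hp => ?_⟩
        rw [hpf i] at hp
        exact hPiPp i p (Finset.mem_inter.mp hp).2
    · intro d hd
      rw [hA] at hd
      funext i
      have hkey : (Finset.univ.biUnion fun j => (d j).primeFactors) ∩ Pi i
          = (d i).primeFactors := by
        ext x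
        simp only [Finset.mem_inter, Finset.mem_biUnion]
        constructor
        · rintro ⟨⟨j, -, hj⟩, hxi⟩
          rcases eq_or_ne j i with rfl | hne
          · exact hj
          · exact absurd (hdvdne x j i (Nat.prime_of_mem_primeFactors hj)
              ((Nat.dvd_of_mem_primeFactors hj).trans (Nat.mem_divisors.mp (hd.1 j)).1)
              (hPidvd i x hxi) hne) not_false
        · intro hx
          exact ⟨⟨i, Finset.mem_univ i, hx⟩, hsub d hd i hx⟩
      show ∏ p ∈ (Finset.univ.biUnion fun j => (d j).primeFactors) ∩ Pi i, p = d i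
      rw [hkey, Nat.prod_primeFactors_of_squarefree (hd.2 i).1]
    · intro S hS
      rw [Finset.mem_powerset] at hS
      have hpr : ∀ i, ∀ p ∈ S ∩ Pi i, p.Prime :=
        fun i p hp => hPiprime i p (Finset.mem_inter.mp hp).2
      have hpf : ∀ i, (∏ p ∈ S ∩ Pi i, p).primeFactors = S ∩ Pi i :=
        fun i => Nat.primeFactors_prod (hpr i)
      show (Finset.univ.biUnion fun i => (∏ p ∈ S ∩ Pi i, p).primeFactors) = S
      ext x
      simp only [Finset.mem_biUnion, hpf, Finset.mem_inter]
      constructor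
      · rintro ⟨i, -, hxS, -⟩
        exact hxS
      · intro hx
        obtain ⟨i, hi⟩ := hPmem x (hS hx)
        exact ⟨i, Finset.mem_univ i, hx, hi⟩
    · intro d hd
      rw [hA] at hd
      have hpfdisj : (↑(Finset.univ : Finset (Fin n)) : Set (Fin n)).PairwiseDisjoint
          (fun i => (d i).primeFactors) := by
        intro i _ j _ hij
        exact (hdisj i j hij).mono (hsub d hd i) (hsub d hd j)
      have e1 : ∏ p ∈ Finset.univ.biUnion (fun i => (d i).primeFactors), p = ∏ i, d i := by
        rw [Finset.prod_biUnion hpfdisj]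
        exact Finset.prod_congr rfl fun i _ =>
          Nat.prod_primeFactors_of_squarefree (hd.2 i).1
      have e2 : ∏ p ∈ Finset.univ.biUnion (fun i => (d i).primeFactors), (1 - g p)
          = ∏ i, ∏ p ∈ (d i).primeFactors, (1 - f i p) := by
        rw [Finset.prod_biUnion hpfdisj]
        refine Finset.prod_congr rfl fun i _ => Finset.prod_congr rfl fun p hp => ?_
        rw [hg i p (hsub d hd i hp)]
      rw [e1, e2]
  constructor
  · rw [reindex lamMinus, ← hprodP]
    have h := hn_core (fun m => -(lamMinus m)) g P hPprime hg0 hg1 ?_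
    · simp only [neg_mul, Finset.sum_neg_distrib, hlam1m] at h
      linarith
    · intro N hN
      have := (hsieve N hN).1
      rw [Finset.sum_neg_distrib]
      linarith
  · rw [reindex lamPlus, ← hprodP]
    have h := hn_core lamPlus g P hPprime hg0 hg1 (fun N hN => (hsieve N hN).2)
    rwa [hlam1p, one_mul] at h
end

section
/- Let n ∈ ℕ and let D₀ < z be real numbers with D₀ ≥ 2. Set P(z) = ∏_{D₀ < p ≤ z} p (product over primes) and, for a nonzero integer k, ω(k;z) = #{p prime : p ∣ k, D₀ < p ≤ z}. Then for every k ∈ (ℤ∖{0})ⁿ with gcd(kᵢ,k_j) = 1 for all i ≠ j, one has ∏_{i=1}^n 2^{−ω(kᵢ;z)} ≥ Σ λ⁻_{d₁⋯dₙ} / (τ(d₁)⋯τ(dₙ)), where the sum runs over n-tuples (d₁,…,dₙ) of positive integers with dᵢ ∣ gcd(kᵢ, P(z)) and gcd(dᵢ,d_j) = 1 for i ≠ j, and τ denotes the number-of-divisors function. -/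
open scoped Classical

open Finset ArithmeticFunction

private lemma nat_squarefree_prod_of_coprime {ι : Type*} {s : Finset ι} {f : ι → ℕ}
    (hsq : ∀ i ∈ s, Squarefree (f i))
    (hcp : ∀ i ∈ s, ∀ j ∈ s, i ≠ j → Nat.Coprime (f i) (f j)) :
    Squarefree (∏ i ∈ s, f i) := by
  classical
  induction s using Finset.induction_on with
  | empty => simpa using squarefree_one
  | @insert a t ha ih =>
    rw [Finset.prod_insert ha]
    have hcopr : Nat.Coprime (f a) (∏ i ∈ t, f i) :=
      Nat.Coprime.prod_right fun j hj =>
        hcp a (mem_insert_self _ _) j (mem_insert_of_mem hj) (by rintro rfl; exact ha hj)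
    exact (Nat.squarefree_mul hcopr).mpr
      ⟨hsq a (mem_insert_self _ _),
       ih (fun i hi => hsq i (mem_insert_of_mem hi))
          (fun i hi j hj hij => hcp i (mem_insert_of_mem hi) j (mem_insert_of_mem hj) hij)⟩

private lemma nat_gcd_prod_of_coprime {ι : Type*} {s : Finset ι} {f : ι → ℕ} (D : ℕ)
    (hcp : ∀ i ∈ s, ∀ j ∈ s, i ≠ j → Nat.Coprime (f i) (f j)) :
    Nat.gcd D (∏ i ∈ s, f i) = ∏ i ∈ s, Nat.gcd D (f i) := by
  classical
  induction s using Finset.induction_on with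
  | empty => simp
  | @insert a t ha ih =>
    rw [Finset.prod_insert ha, Finset.prod_insert ha]
    have hcopr : Nat.Coprime (f a) (∏ i ∈ t, f i) :=
      Nat.Coprime.prod_right fun j hj =>
        hcp a (mem_insert_self _ _) j (mem_insert_of_mem hj) (by rintro rfl; exact ha hj)
    rw [Nat.Coprime.gcd_mul D hcopr,
      ih (fun i hi j hj hij => hcp i (mem_insert_of_mem hi) j (mem_insert_of_mem hj) hij)]

private lemma card_divisors_of_squarefree {M : ℕ} (h : Squarefree M) :
    M.divisors.card = 2 ^ M.primeFactors.card := by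
  rw [Nat.card_divisors h.ne_zero]
  refine (Finset.prod_congr rfl fun p hp => ?_).trans (Finset.prod_const 2)
  have hle : M.factorization p ≤ 1 :=
    (Nat.squarefree_iff_factorization_le_one h.ne_zero).mp h p
  have hne : M.factorization p ≠ 0 := by
    rw [← Nat.support_factorization] at hp
    exact Finsupp.mem_support_iff.mp hp
  omega

private lemma key_sum_le (lamMinus : ℕ → ℝ) (hlam1 : lamMinus 1 = 1)
    (hsieve : ∀ N : ℕ, 1 < N → (∑ d ∈ N.divisors, lamMinus d) ≤ 0)
    {M : ℕ} (hsq : Squarefree M) :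
    ∑ D ∈ M.divisors, lamMinus D / (D.divisors.card : ℝ)
      ≤ 1 / (M.divisors.card : ℝ) := by
  have hM : M ≠ 0 := hsq.ne_zero
  set F : ArithmeticFunction ℝ := ⟨fun d => if d = 0 then 0 else lamMinus d, by simp⟩ with hFdef
  have hFapp : ∀ d : ℕ, d ≠ 0 → F d = lamMinus d := fun d hd => if_neg hd
  set Z : ArithmeticFunction ℝ := ((ArithmeticFunction.zeta : ArithmeticFunction ℕ) : ArithmeticFunction ℝ) with hZdef
  have hZapp : ∀ d : ℕ, d ≠ 0 → Z d = 1 := by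
    intro d hd
    simp [hZdef, ArithmeticFunction.natCoe_apply, ArithmeticFunction.zeta_apply_ne hd]
  have hZZ : ∀ b : ℕ, (Z * Z) b = (b.divisors.card : ℝ) := by
    intro b
    rw [show (Z * Z) b = ∑ i ∈ b.divisors, Z i from coe_mul_zeta_apply]
    rw [Finset.sum_congr rfl (fun i hi => hZapp i (Nat.pos_of_mem_divisors hi).ne')]
    simp
  have hcard_pos : ∀ d : ℕ, d ≠ 0 → (0:ℝ) < (d.divisors.card : ℝ) := by
    intro d hd
    exact_mod_cast Finset.card_pos.mpr ⟨1, Nat.one_mem_divisors.mpr hd⟩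
  have hnum : ∑ D ∈ M.divisors, lamMinus D * ((M / D).divisors.card : ℝ) ≤ 1 := by
    have h1 : ∑ D ∈ M.divisors, lamMinus D * ((M / D).divisors.card : ℝ)
        = (F * (Z * Z)) M := by
      rw [ArithmeticFunction.mul_apply,
        Nat.sum_divisorsAntidiagonal (fun a b => F a * (Z * Z) b)]
      refine Finset.sum_congr rfl fun D hD => ?_
      rw [hFapp D (Nat.pos_of_mem_divisors hD).ne', hZZ]
    have h2 : (F * (Z * Z)) M = ∑ e ∈ M.divisors, ∑ D ∈ e.divisors, lamMinus D := by
      rw [← mul_assoc, coe_mul_zeta_apply]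
      refine Finset.sum_congr rfl fun e he => ?_
      rw [show (F * Z) e = ∑ i ∈ e.divisors, F i from coe_mul_zeta_apply]
      exact Finset.sum_congr rfl fun D hD => hFapp D (Nat.pos_of_mem_divisors hD).ne'
    rw [h1, h2]
    calc ∑ e ∈ M.divisors, ∑ D ∈ e.divisors, lamMinus D
        ≤ ∑ e ∈ M.divisors, (if e = 1 then (1:ℝ) else 0) := by
          refine Finset.sum_le_sum fun e he => ?_
          by_cases he1 : e = 1
          · subst he1
            simp [Nat.divisors_one, hlam1]
          · have h1e : 1 < e :=
              lt_of_le_of_ne (Nat.one_le_iff_ne_zero.mpr (Nat.pos_of_mem_divisors he).ne')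
                (Ne.symm he1)
            simpa [he1] using hsieve e h1e
      _ = 1 := by
          rw [Finset.sum_ite_eq' M.divisors 1 (fun _ => (1:ℝ))]
          simp [Nat.one_mem_divisors.mpr hM]
  have hstep : ∀ D ∈ M.divisors, lamMinus D / (D.divisors.card : ℝ)
      = lamMinus D * ((M / D).divisors.card : ℝ) / (M.divisors.card : ℝ) := by
    intro D hD
    obtain ⟨hdvd, -⟩ := Nat.mem_divisors.mp hD
    have hD0 : D ≠ 0 := (Nat.pos_of_mem_divisors hD).ne'
    have hMD : D * (M / D) = M := Nat.mul_div_cancel' hdvd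
    have hcop : Nat.Coprime D (M / D) := Nat.coprime_of_squarefree_mul (by rw [hMD]; exact hsq)
    have hτ : M.divisors.card = D.divisors.card * (M / D).divisors.card := by
      conv_lhs => rw [← hMD]
      exact hcop.card_divisors_mul
    have hMD0 : M / D ≠ 0 := by
      intro h
      rw [h, mul_zero] at hMD
      exact hM hMD.symm
    have hd1 : (D.divisors.card : ℝ) ≠ 0 := (hcard_pos D hD0).ne'
    have hd2 : ((M / D).divisors.card : ℝ) ≠ 0 := (hcard_pos _ hMD0).ne'
    rw [hτ]
    push_cast
    field_simp
  rw [Finset.sum_congr rfl hstep, ← Finset.sum_div]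
  gcongr

/-- Lower-bound sieve weights against the function `2^{-ω(k;z)}`:
for pairwise coprime nonzero integers `k₁,…,kₙ`,
`∏ᵢ 2^{-ω(kᵢ;z)} ≥ Σ λ⁻_{d₁⋯dₙ}/(τ(d₁)⋯τ(dₙ))`, the sum being over pairwise coprime
`dᵢ ∣ gcd(kᵢ, P(z))`, where `P(z)` is the product of primes `D₀ < p ≤ z` and
`ω(k;z)` counts prime divisors of `k` in `(D₀, z]`. -/
theorem neutralised_lower_bound_omega (n : ℕ)
    (lamMinus : ℕ → ℝ) (hlam1 : lamMinus 1 = 1)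
    (hsieve : ∀ N : ℕ, 1 < N → (∑ d ∈ N.divisors, lamMinus d) ≤ 0)
    (D₀ z : ℝ) (hD₀ : 2 ≤ D₀) (hz : D₀ < z)
    (k : Fin n → ℤ) (hk : ∀ i, k i ≠ 0)
    (hcop : ∀ i j, i ≠ j → IsCoprime (k i) (k j)) :
    (∑ d ∈ (Fintype.piFinset fun i =>
        (Int.gcd (k i) ((∏ p ∈ (Finset.range (⌊z⌋₊ + 1)).filter
            (fun p => Nat.Prime p ∧ D₀ < (p : ℝ)), p : ℕ) : ℤ)).divisors).filter
        (fun d => ∀ i j, i ≠ j → Nat.Coprime (d i) (d j)),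
        lamMinus (∏ i, d i) / ∏ i, ((d i).divisors.card : ℝ))
      ≤ ∏ i, (2 : ℝ) ^
          (-((((k i).natAbs.primeFactors.filter
              (fun p => D₀ < (p : ℝ) ∧ (p : ℝ) ≤ z)).card : ℤ))) := by
  classical
  set s : Finset ℕ := (Finset.range (⌊z⌋₊ + 1)).filter
      (fun p => Nat.Prime p ∧ D₀ < (p : ℝ)) with hs
  set P : ℕ := ∏ p ∈ s, p with hP
  have hsprime : ∀ p ∈ s, p.Prime := fun p hp => ((Finset.mem_filter.mp hp).2).1
  have hPsq : Squarefree P :=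
    nat_squarefree_prod_of_coprime (fun p hp => (hsprime p hp).prime.squarefree)
      (fun p hp q hq hpq => (Nat.coprime_primes (hsprime p hp) (hsprime q hq)).mpr hpq)
  have hP0 : P ≠ 0 := hPsq.ne_zero
  set m : Fin n → ℕ := fun i => Int.gcd (k i) (P : ℤ) with hm
  have hmgcd : ∀ i, m i = Nat.gcd (k i).natAbs P := by
    intro i
    simp [hm, Int.gcd, Int.natAbs_natCast]
  have hmdvdP : ∀ i, m i ∣ P := fun i => (hmgcd i) ▸ Nat.gcd_dvd_right _ _
  have hm0 : ∀ i, m i ≠ 0 := by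
    intro i h
    rw [hmgcd i] at h
    exact hP0 (Nat.eq_zero_of_gcd_eq_zero_right h)
  have hmsq : ∀ i, Squarefree (m i) := fun i => hPsq.squarefree_of_dvd (hmdvdP i)
  have hmcop : ∀ i j, i ≠ j → Nat.Coprime (m i) (m j) := by
    intro i j hij
    have h1 : Nat.Coprime (k i).natAbs (k j).natAbs :=
      Int.isCoprime_iff_gcd_eq_one.mp (hcop i j hij)
    exact Nat.Coprime.coprime_dvd_left ((hmgcd i) ▸ Nat.gcd_dvd_left _ _)
      (Nat.Coprime.coprime_dvd_right ((hmgcd j) ▸ Nat.gcd_dvd_left _ _) h1)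
  set M : ℕ := ∏ i, m i with hM
  have hMsq : Squarefree M :=
    nat_squarefree_prod_of_coprime (fun i _ => hmsq i) (fun i _ j _ hij => hmcop i j hij)
  have hM0 : M ≠ 0 := hMsq.ne_zero
  -- Reindex the sum over tuples as a sum over divisors of `M`.
  have hsum_eq : (∑ d ∈ (Fintype.piFinset fun i => (m i).divisors).filter
        (fun d => ∀ i j, i ≠ j → Nat.Coprime (d i) (d j)),
        lamMinus (∏ i, d i) / ∏ i, ((d i).divisors.card : ℝ))
      = ∑ D ∈ M.divisors, lamMinus D / (D.divisors.card : ℝ) := by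
    refine Finset.sum_nbij' (fun d => ∏ i, d i) (fun D => fun i => Nat.gcd D (m i))
      ?_ ?_ ?_ ?_ ?_
    · -- forward membership
      intro d hd
      obtain ⟨hd1, -⟩ := Finset.mem_filter.mp hd
      rw [Fintype.mem_piFinset] at hd1
      refine Nat.mem_divisors.mpr ⟨?_, hM0⟩
      exact Finset.prod_dvd_prod_of_dvd _ _ (fun i _ => Nat.dvd_of_mem_divisors (hd1 i))
    · -- backward membership
      intro D hD
      refine Finset.mem_filter.mpr ⟨?_, ?_⟩
      · rw [Fintype.mem_piFinset]
        exact fun i => Nat.mem_divisors.mpr ⟨Nat.gcd_dvd_right _ _, hm0 i⟩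
      · intro i j hij
        exact Nat.Coprime.coprime_dvd_left (Nat.gcd_dvd_right _ _)
          (Nat.Coprime.coprime_dvd_right (Nat.gcd_dvd_right _ _) (hmcop i j hij))
    · -- left inverse
      intro d hd
      obtain ⟨hd1, -⟩ := Finset.mem_filter.mp hd
      rw [Fintype.mem_piFinset] at hd1
      funext i
      show Nat.gcd (∏ j, d j) (m i) = d i
      have hsplit : ∏ j, d j = d i * ∏ j ∈ Finset.univ.erase i, d j :=
        (Finset.mul_prod_erase _ _ (Finset.mem_univ i)).symm
      have hcpr : Nat.Coprime (∏ j ∈ Finset.univ.erase i, d j) (m i) :=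
        Nat.Coprime.prod_left fun j hj =>
          Nat.Coprime.coprime_dvd_left (Nat.dvd_of_mem_divisors (hd1 j))
            (hmcop j i (Finset.ne_of_mem_erase hj))
      rw [hsplit, Nat.Coprime.gcd_mul_right_cancel _ hcpr,
        Nat.gcd_eq_left (Nat.dvd_of_mem_divisors (hd1 i))]
    · -- right inverse
      intro D hD
      have hdvd : D ∣ M := Nat.dvd_of_mem_divisors hD
      show (∏ i, Nat.gcd D (m i)) = D
      have := nat_gcd_prod_of_coprime (s := Finset.univ) (f := m) D
        (fun i _ j _ hij => hmcop i j hij)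
      rw [← this, ← hM, Nat.gcd_eq_left hdvd]
    · -- values agree
      intro d hd
      obtain ⟨hd1, hd2⟩ := Finset.mem_filter.mp hd
      rw [Fintype.mem_piFinset] at hd1
      show lamMinus (∏ i, d i) / ∏ i, ((d i).divisors.card : ℝ)
        = lamMinus (∏ i, d i) / (((∏ i, d i).divisors.card : ℕ) : ℝ)
      congr 1
      have := (ArithmeticFunction.isMultiplicative_sigma (k := 0)).map_prod d Finset.univ
        (fun i _ j hj hij => hd2 i j hij)
      simp only [ArithmeticFunction.sigma_zero_apply] at this
      rw [this]
      push_cast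
      rfl
  rw [hsum_eq]
  -- identify the right-hand side with `1 / τ(M)`
  have hω : ∀ i, ((k i).natAbs.primeFactors.filter
      (fun p => D₀ < (p : ℝ) ∧ (p : ℝ) ≤ z)).card = (m i).primeFactors.card := by
    intro i
    simp only [Finset.pure_def, Finset.bind_def, Finset.sup_singleton_apply]
    rw [Finset.filter_image, Finset.card_image_of_injective _ Nat.cast_injective]
    refine congrArg Finset.card ?_
    rw [hmgcd i, Nat.primeFactors_gcd (Int.natAbs_ne_zero.mpr (hk i)) hP0, hP,
      Nat.primeFactors_prod hsprime]
    ext p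
    simp only [Finset.mem_filter, Finset.mem_inter, hs, Finset.mem_range]
    constructor
    · rintro ⟨hpf, hD, hpz⟩
      have hp : p.Prime := Nat.prime_of_mem_primeFactors hpf
      exact ⟨hpf, Nat.lt_succ_of_le (Nat.le_floor hpz), hp, hD⟩
    · rintro ⟨hpf, hlt, hp, hD⟩
      refine ⟨hpf, hD, ?_⟩
      have hple : p ≤ ⌊z⌋₊ := Nat.lt_succ_iff.mp hlt
      have hz0 : (0:ℝ) ≤ z := le_trans (by norm_num) (le_of_lt (lt_of_le_of_lt hD₀ hz))
      calc (p : ℝ) ≤ (⌊z⌋₊ : ℝ) := by exact_mod_cast hple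
        _ ≤ z := Nat.floor_le hz0
  have hRHS : (∏ i, (2 : ℝ) ^
      (-((((k i).natAbs.primeFactors.filter
          (fun p => D₀ < (p : ℝ) ∧ (p : ℝ) ≤ z)).card : ℤ))))
      = 1 / (M.divisors.card : ℝ) := by
    have hτprod : (M.divisors.card : ℝ) = ∏ i, ((m i).divisors.card : ℝ) := by
      have := (ArithmeticFunction.isMultiplicative_sigma (k := 0)).map_prod m Finset.univ
        (fun i _ j _ hij => hmcop i j hij)
      simp only [ArithmeticFunction.sigma_zero_apply] at this
      rw [hM, this]
      push_cast
      rfl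
    rw [hτprod, one_div, ← Finset.prod_inv_distrib]
    refine Finset.prod_congr rfl fun i _ => ?_
    rw [hω i, card_divisors_of_squarefree (hmsq i)]
    rw [zpow_neg, zpow_natCast]
    push_cast
    rfl
  rw [hRHS]
  exact key_sum_le lamMinus hlam1 hsieve hMsq
end

section
/- Let G ⊆ ℤ² be a rank-2 sublattice that is primitive, i.e. the only integers δ with G ⊆ δℤ² are δ = ±1, and let k be a squarefree positive integer dividing det(G). Then the sublattice G(k) = {x ∈ G : k divides both coordinates of x} = G ∩ (kℤ)² satisfies det(G(k)) = k·det(G). -/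
open AddSubgroup

private lemma index_inf_of_coprime' {A : Type*} [AddGroup A] {H K : AddSubgroup A}
    (hH : H.index ≠ 0) (hK : K.index ≠ 0) (hco : Nat.Coprime H.index K.index) :
    (H ⊓ K).index = H.index * K.index := by
  haveI : H.FiniteIndex := ⟨hH⟩
  haveI : K.FiniteIndex := ⟨hK⟩
  have h1 : H.index * K.index ∣ (H ⊓ K).index :=
    hco.mul_dvd_of_dvd_of_dvd (AddSubgroup.index_dvd_of_le inf_le_left)
      (AddSubgroup.index_dvd_of_le inf_le_right)
  have h3 : (H ⊓ K).index ≠ 0 := AddSubgroup.FiniteIndex.index_ne_zero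
  exact le_antisymm AddSubgroup.index_inf_le (Nat.le_of_dvd (Nat.pos_of_ne_zero h3) h1)

private lemma prod_inf_prod'' {M N : Type*} [AddGroup M] [AddGroup N]
    {A B : AddSubgroup M} {C D : AddSubgroup N} :
    (A ⊓ B).prod (C ⊓ D) = A.prod C ⊓ B.prod D := by
  ext x
  simp only [AddSubgroup.mem_prod, AddSubgroup.mem_inf]
  tauto

private lemma relindex_prime' (G : AddSubgroup (ℤ × ℤ)) (hG : G.index ≠ 0)
    (hprim : ∀ δ : ℤ, (∀ x ∈ G, δ ∣ x.1 ∧ δ ∣ x.2) → δ = 1 ∨ δ = -1)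
    (p : ℕ) (hp : p.Prime) (hpn : p ∣ G.index) :
    ((AddSubgroup.zmultiples (p : ℤ)).prod (AddSubgroup.zmultiples (p : ℤ))).relIndex G = p := by
  haveI : Fact p.Prime := ⟨hp⟩
  haveI : NeZero p := ⟨hp.ne_zero⟩
  set φ : ℤ × ℤ →+ ZMod p × ZMod p :=
    AddMonoidHom.prodMap (Int.castAddHom (ZMod p)) (Int.castAddHom (ZMod p)) with hφ
  have hφ0 : ∀ x : ℤ × ℤ, φ x = 0 ↔ (p : ℤ) ∣ x.1 ∧ (p : ℤ) ∣ x.2 := by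
    intro x
    simp [hφ, Prod.ext_iff, AddMonoidHom.prodMap, ZMod.intCast_zmod_eq_zero_iff_dvd]
  have hker : φ.ker = (AddSubgroup.zmultiples (p : ℤ)).prod (AddSubgroup.zmultiples (p : ℤ)) := by
    ext x
    simp only [AddMonoidHom.mem_ker, hφ0, AddSubgroup.mem_prod, Int.mem_zmultiples_iff]
  rw [← hker, AddSubgroup.relIndex_ker]
  set m := Nat.card (G.map φ) with hm
  have hdvd : m ∣ p * p := by
    have := AddSubgroup.card_addSubgroup_dvd_card (G.map φ)
    rwa [Nat.card_prod, Nat.card_zmod] at this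
  have hne1 : m ≠ 1 := by
    intro h1
    have hbot : G.map φ = ⊥ := AddSubgroup.card_eq_one.mp h1
    have : ∀ x ∈ G, (p : ℤ) ∣ x.1 ∧ (p : ℤ) ∣ x.2 := by
      intro x hx
      have : φ x ∈ G.map φ := AddSubgroup.mem_map_of_mem φ hx
      rw [hbot, AddSubgroup.mem_bot] at this
      exact (hφ0 x).mp this
    rcases hprim (p : ℤ) this with h | h
    · exact hp.one_lt.ne' (by exact_mod_cast h)
    · have h0 : (0 : ℤ) ≤ (p : ℤ) := Int.natCast_nonneg p
      omega
  have hnepp : m ≠ p * p := by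
    intro hpp
    have htop : G.map φ = ⊤ := by
      apply AddSubgroup.eq_top_of_card_eq
      rw [← hm, hpp, Nat.card_prod, Nat.card_zmod]
    have hsurj : ∀ z : ZMod p × ZMod p, ∃ g ∈ G, φ g = z := by
      intro z
      have : z ∈ G.map φ := htop ▸ AddSubgroup.mem_top z
      simpa [AddSubgroup.mem_map] using this
    -- the quotient
    set Q := (ℤ × ℤ) ⧸ G with hQ
    have hcard : Nat.card Q = G.index := rfl
    haveI : Finite Q := Nat.finite_of_card_ne_zero (by rw [hcard]; exact hG)
    have hsurjQ : Function.Surjective (fun q : Q => p • q) := by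
      intro q
      obtain ⟨x, rfl⟩ := QuotientAddGroup.mk'_surjective G q
      obtain ⟨g, hgG, hgx⟩ := hsurj (φ x)
      have hdv : (p : ℤ) ∣ (x - g).1 ∧ (p : ℤ) ∣ (x - g).2 := by
        apply (hφ0 _).mp
        rw [map_sub, hgx, sub_self]
      obtain ⟨a, ha⟩ := hdv.1
      obtain ⟨b, hb⟩ := hdv.2
      refine ⟨QuotientAddGroup.mk' G (a, b), ?_⟩
      have hy : p • ((a, b) : ℤ × ℤ) = x - g := by
        rw [Prod.ext_iff]
        constructor
        · show p • a = (x - g).1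
          rw [nsmul_eq_mul, ← ha]
        · show p • b = (x - g).2
          rw [nsmul_eq_mul, ← hb]
      show p • QuotientAddGroup.mk' G (a, b) = QuotientAddGroup.mk' G x
      have hg0 : (QuotientAddGroup.mk' G) g = 0 := (QuotientAddGroup.eq_zero_iff g).mpr hgG
      rw [← map_nsmul, hy, map_sub, hg0, sub_zero]
    have hinjQ : Function.Injective (fun q : Q => p • q) :=
      Finite.injective_iff_surjective.mpr hsurjQ
    obtain ⟨q, hq⟩ := exists_prime_addOrderOf_dvd_card' (G := Q) p (by rw [hcard]; exact hpn)
    have hq0 : p • q = 0 := by rw [← hq]; exact addOrderOf_nsmul_eq_zero q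
    have : q = 0 := hinjQ (by simpa using hq0)
    rw [this, addOrderOf_zero] at hq
    exact hp.one_lt.ne' hq.symm
  -- m divides p^2, m ≠ 1, m ≠ p^2
  have hdvd2 : m ∣ p ^ 2 := by rw [pow_two]; exact hdvd
  obtain ⟨i, hi, him⟩ := (Nat.dvd_prime_pow hp).mp hdvd2
  interval_cases i
  · rw [pow_zero] at him; exact absurd him hne1
  · rw [pow_one] at him; exact him
  · rw [pow_two] at him; exact absurd him hnepp

private lemma relindex_squarefree' (G : AddSubgroup (ℤ × ℤ)) (hG : G.index ≠ 0)
    (hprim : ∀ δ : ℤ, (∀ x ∈ G, δ ∣ x.1 ∧ δ ∣ x.2) → δ = 1 ∨ δ = -1) :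
    ∀ k : ℕ, Squarefree k → k ∣ G.index →
      ((AddSubgroup.zmultiples (k : ℤ)).prod (AddSubgroup.zmultiples (k : ℤ))).relIndex G = k := by
  intro k
  induction k using Nat.strong_induction_on with
  | _ k ih =>
    intro hk hkdvd
    rcases eq_or_ne k 1 with rfl | hk1
    · have h1 : AddSubgroup.zmultiples ((1 : ℕ) : ℤ) = (⊤ : AddSubgroup ℤ) := by
        ext x
        constructor
        · intro _; trivial
        · intro _
          rw [Int.mem_zmultiples_iff, Nat.cast_one]
          exact one_dvd x
      rw [h1, AddSubgroup.top_prod_top, AddSubgroup.relIndex_top_left]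
    · set p := k.minFac with hpdef
      have hp : p.Prime := Nat.minFac_prime hk1
      obtain ⟨k', hkk'⟩ := k.minFac_dvd
      have hk0 : k ≠ 0 := hk.ne_zero
      have hk'0 : k' ≠ 0 := by
        rintro rfl
        exact hk0 (hkk'.trans (mul_zero p))
      have hk'lt : k' < k := by
        rw [hkk']
        exact lt_mul_of_one_lt_left (Nat.pos_of_ne_zero hk'0) hp.one_lt
      have hco : Nat.Coprime p k' := by
        rw [hp.coprime_iff_not_dvd]
        intro hpk'
        have : p * p ∣ k := by rw [hkk']; exact mul_dvd_mul_left p hpk'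
        exact hp.one_lt.ne' (Nat.isUnit_iff.mp (hk p this))
      have hk'sq : Squarefree k' := Squarefree.squarefree_of_dvd ⟨p, by rw [hkk', mul_comm]⟩ hk
      have hk'n : k' ∣ G.index := dvd_trans ⟨p, by rw [hkk', mul_comm]⟩ hkdvd
      have hpn : p ∣ G.index := dvd_trans ⟨k', hkk'⟩ hkdvd
      have hcoZ : IsCoprime (p : ℤ) (k' : ℤ) := Int.isCoprime_iff_gcd_eq_one.mpr (by
        rwa [Int.gcd_natCast_natCast])
      have hsplit : AddSubgroup.zmultiples ((k : ℕ) : ℤ) =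
          AddSubgroup.zmultiples ((p : ℕ) : ℤ) ⊓ AddSubgroup.zmultiples ((k' : ℕ) : ℤ) := by
        ext x
        simp only [Int.mem_zmultiples_iff, AddSubgroup.mem_inf]
        constructor
        · intro h
          constructor
          · exact dvd_trans (Int.natCast_dvd_natCast.mpr ⟨k', hkk'⟩) h
          · exact dvd_trans (Int.natCast_dvd_natCast.mpr ⟨p, by rw [hkk', mul_comm]⟩) h
        · rintro ⟨h1, h2⟩
          have := hcoZ.mul_dvd h1 h2
          rwa [show ((p : ℤ) * (k' : ℤ)) = ((k : ℕ) : ℤ) by rw [hkk', Nat.cast_mul]] at this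
      set Kp := (AddSubgroup.zmultiples ((p : ℕ) : ℤ)).prod
          (AddSubgroup.zmultiples ((p : ℕ) : ℤ)) with hKp
      set Kk' := (AddSubgroup.zmultiples ((k' : ℕ) : ℤ)).prod
          (AddSubgroup.zmultiples ((k' : ℕ) : ℤ)) with hKk'
      have hKsplit : (AddSubgroup.zmultiples ((k : ℕ) : ℤ)).prod
            (AddSubgroup.zmultiples ((k : ℕ) : ℤ)) = Kp ⊓ Kk' := by
        rw [hKp, hKk', hsplit, prod_inf_prod'']
      have h1 : Kp.relIndex G = p := relindex_prime' G hG hprim p hp hpn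
      have h2 : Kk'.relIndex G = k' := ih k' hk'lt hk'sq hk'n
      have hinf : (Kp ⊓ Kk').addSubgroupOf G =
          Kp.addSubgroupOf G ⊓ Kk'.addSubgroupOf G := by
        ext x
        simp [AddSubgroup.mem_addSubgroupOf, AddSubgroup.mem_inf]
      have h1' : (Kp.addSubgroupOf G).index = p := h1
      have h2' : (Kk'.addSubgroupOf G).index = k' := h2
      rw [hKsplit]
      calc (Kp ⊓ Kk').relIndex G = ((Kp ⊓ Kk').addSubgroupOf G).index := rfl
        _ = (Kp.addSubgroupOf G ⊓ Kk'.addSubgroupOf G).index := by rw [hinf]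
        _ = (Kp.addSubgroupOf G).index * (Kk'.addSubgroupOf G).index :=
            index_inf_of_coprime' (by rw [h1']; exact hp.ne_zero) (by rw [h2']; exact hk'0)
              (by rw [h1', h2']; exact hco)
        _ = k := by rw [h1', h2', hkk']

/-- If `G ⊆ ℤ²` is a primitive rank-2 sublattice (finite index) and `k`
is a squarefree positive integer dividing `det(G) = [ℤ² : G]`, then the sublattice
`G(k) = G ∩ (kℤ)²` has determinant `k · det(G)`. -/
theorem det_inter_primitive_lattice (G : AddSubgroup (ℤ × ℤ)) (hG : G.index ≠ 0)
    (hprim : ∀ δ : ℤ, (∀ x ∈ G, δ ∣ x.1 ∧ δ ∣ x.2) → δ = 1 ∨ δ = -1)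
    (k : ℕ) (hk : Squarefree k) (hkdvd : k ∣ G.index) :
    (G ⊓ (AddSubgroup.prod (AddSubgroup.zmultiples (k : ℤ))
        (AddSubgroup.zmultiples (k : ℤ)))).index = k * G.index := by
  have h := relindex_squarefree' G hG hprim k hk hkdvd
  rw [inf_comm]
  have h2 := AddSubgroup.relIndex_mul_index
    (inf_le_right : ((AddSubgroup.zmultiples (k : ℤ)).prod
      (AddSubgroup.zmultiples (k : ℤ))) ⊓ G ≤ G)
  rw [AddSubgroup.inf_relIndex_right, h] at h2
  exact h2.symm
end

section
/- Let Δ ∈ ℤ[s,t] be a separable binary form of degree d ≥ 1 (no repeated roots in P¹ over ℂ) and let ℛ ⊂ ℝ² be a bounded set. Then there is a constant C, depending only on Δ and ℛ, such that for all real numbers B ≥ 2 and m ≥ 1: vol{(s,t) ∈ Bℛ : |Δ(s,t)| < m·B^{d/2}} ≤ C·m·B^{3/2}, where vol denotes Lebesgue measure and Bℛ = {Bx : x ∈ ℛ}. -/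
open scoped Classical Pointwise

open Polynomial MvPolynomial MeasureTheory Metric Set

lemma ms_prod_lb (r : ℝ) (hr : 0 ≤ r) (x : ℂ) :
    ∀ (M : Multiset ℂ), (∀ z ∈ M, r ≤ ‖x - z‖) →
      r ^ (Multiset.card M) ≤ (M.map fun z => ‖x - z‖).prod := by
  intro M
  induction M using Multiset.induction with
  | empty => simp
  | cons a s ih =>
    intro h
    simp only [Multiset.map_cons, Multiset.prod_cons, Multiset.card_cons, pow_succ']
    refine mul_le_mul (h a (Multiset.mem_cons_self a s)) (ih fun z hz => h z (Multiset.mem_cons_of_mem hz)) (by positivity) (by positivity)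

lemma slice_vol (p : Polynomial ℝ) (d : ℕ) (hd : 1 ≤ d) (hdeg : p.natDegree ≤ d)
    (ha0 : p.coeff d ≠ 0) (Z : ℝ) (hZ : 0 < Z) :
    volume {s : ℝ | |p.eval s| < Z} ≤
      (d : ENNReal) * ENNReal.ofReal (2 * (Z / |p.coeff d|) ^ ((1:ℝ)/d)) := by
  classical
  set a := p.coeff d with ha
  have hnd : p.natDegree = d := le_antisymm hdeg (le_natDegree_of_ne_zero ha0)
  have hlc : p.leadingCoeff = a := by rw [leadingCoeff, hnd]
  have hp0 : p ≠ 0 := fun h => ha0 (by rw [ha, h, Polynomial.coeff_zero])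
  set r : ℝ := (Z / |a|) ^ ((1:ℝ)/d) with hr
  have hrpos : 0 < r := Real.rpow_pos_of_pos (div_pos hZ (abs_pos.mpr ha0)) _
  set P : Polynomial ℂ := p.map (algebraMap ℝ ℂ) with hP
  have hPnd : P.natDegree = d := by rw [hP, Polynomial.natDegree_map, hnd]
  have hsplits : Splits P := IsAlgClosed.splits P
  have hcard : Multiset.card P.roots = d := by
    rw [Polynomial.splits_iff_card_roots.mp hsplits, hPnd]
  have hPlc : ‖P.leadingCoeff‖ = |a| := by
    rw [hP, Polynomial.leadingCoeff_map, hlc]; exact (Complex.norm_real a).trans (Real.norm_eq_abs a)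
  -- product formula
  have hprod : ∀ x : ℝ, |p.eval x| =
      ‖P.leadingCoeff‖ * ((P.roots.map fun z => ‖(x:ℂ) - z‖).prod) := by
    intro x
    have h1 : P.eval (x:ℂ) = ((p.eval x : ℝ) : ℂ) := by
      rw [hP, Polynomial.eval_map]
      exact Polynomial.eval₂_at_apply (algebraMap ℝ ℂ) x
    have h2 := hsplits.eq_prod_roots
    calc |p.eval x| = ‖P.eval (x:ℂ)‖ := by rw [h1, Complex.norm_real, Real.norm_eq_abs]
      _ = ‖P.leadingCoeff‖ * ((P.roots.map fun z => ‖(x:ℂ) - z‖).prod) := by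
          conv_lhs => rw [h2]
          rw [Polynomial.eval_mul, norm_mul, Polynomial.eval_C,
            Polynomial.eval_multiset_prod, Multiset.map_map, ← normHom_apply (α := ℂ) (Multiset.prod _),
            map_multiset_prod (normHom : ℂ →*₀ ℝ), Multiset.map_map]
          congr 2
          ext z
          simp
  -- subset of union of balls
  have hsub : {s : ℝ | |p.eval s| < Z} ⊆
      ⋃ z ∈ P.roots.toFinset, closedBall z.re r := by
    intro x hx
    simp only [mem_setOf_eq] at hx
    by_contra hmem
    simp only [mem_iUnion, Multiset.mem_toFinset, mem_closedBall, not_exists, not_and,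
      not_le, Real.dist_eq] at hmem
    have hall : ∀ z ∈ P.roots, r ≤ ‖(x:ℂ) - z‖ := by
      intro z hz
      have h1 : r < |x - z.re| := hmem z hz
      have h2 : |x - z.re| ≤ ‖(x:ℂ) - z‖ := by
        have := Complex.abs_re_le_norm ((x:ℂ) - z)
        simpa using this
      linarith
    have hge := ms_prod_lb r hrpos.le (x:ℂ) P.roots hall
    rw [hcard] at hge
    have hrd : r ^ d = Z / |a| := by
      rw [hr, one_div]
      exact Real.rpow_inv_natCast_pow (by positivity) (by omega)
    have : Z ≤ |p.eval x| := by
      rw [hprod x, hPlc]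
      calc Z = |a| * (Z / |a|) := by field_simp
        _ = |a| * r ^ d := by rw [hrd]
        _ ≤ |a| * (P.roots.map fun z => ‖(x:ℂ) - z‖).prod := by
            exact mul_le_mul_of_nonneg_left hge (abs_nonneg a)
    linarith
  calc volume {s : ℝ | |p.eval s| < Z} ≤ volume (⋃ z ∈ P.roots.toFinset, closedBall z.re r) :=
        measure_mono hsub
    _ ≤ ∑ z ∈ P.roots.toFinset, volume (closedBall z.re r) := measure_biUnion_finset_le _ _
    _ = P.roots.toFinset.card * ENNReal.ofReal (2 * r) := by
        simp [Real.volume_closedBall, Finset.sum_const, nsmul_eq_mul]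
    _ ≤ (d : ENNReal) * ENNReal.ofReal (2 * r) := by
        gcongr
        exact_mod_cast (Multiset.toFinset_card_le _).trans hcard.le

lemma cont_aeval2 (Δ : MvPolynomial (Fin 2) ℤ) {g h : ℝ × ℝ → ℝ}
    (hg : Continuous g) (hh : Continuous h) :
    Continuous fun y => (MvPolynomial.aeval ![g y, h y] Δ : ℝ) := by
  induction Δ using MvPolynomial.induction_on with
  | C a => simpa using continuous_const
  | add p q hp hq => simp only [map_add]; exact hp.add hq
  | mul_X p i hp =>
    simp only [map_mul, MvPolynomial.aeval_X]
    refine hp.mul ?_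
    fin_cases i
    · simpa using hg
    · simpa using hh

lemma top_coeff_pow (u l : ℝ) (n : ℕ) :
    ((Polynomial.C u + Polynomial.C l * Polynomial.X : ℝ[X]) ^ n).coeff n = l ^ n ∧
    ((Polynomial.C u + Polynomial.C l * Polynomial.X : ℝ[X]) ^ n).natDegree ≤ n := by
  set B : ℝ[X] := Polynomial.C u + Polynomial.C l * Polynomial.X with hB
  have hdeg : B.natDegree ≤ 1 := by
    refine (natDegree_add_le _ _).trans ?_
    simp only [natDegree_C, max_le_iff]
    exact ⟨Nat.zero_le _, (natDegree_mul_le).trans (by simp)⟩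
  induction n with
  | zero => simp
  | succ n ih =>
    obtain ⟨ih1, ih2⟩ := ih
    constructor
    · have hsplit : B ^ (n+1) = B ^ n * Polynomial.C u + (B ^ n * Polynomial.C l) * Polynomial.X := by
        rw [pow_succ, hB]; ring
      rw [hsplit, Polynomial.coeff_add, Polynomial.coeff_mul_C, Polynomial.coeff_mul_X, Polynomial.coeff_mul_C, ih1,
        coeff_eq_zero_of_natDegree_lt (lt_of_le_of_lt ih2 (Nat.lt_succ_self n))]
      ring
    · calc (B ^ (n+1)).natDegree ≤ (n+1) * B.natDegree := natDegree_pow_le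
        _ ≤ (n+1) * 1 := Nat.mul_le_mul_left _ hdeg
        _ = n + 1 := by ring

lemma shear_poly (Δ : MvPolynomial (Fin 2) ℤ) (l u : ℝ) :
    ∀ s : ℝ, ((MvPolynomial.aeval
        ![(Polynomial.X : ℝ[X]), Polynomial.C u + Polynomial.C l * Polynomial.X] Δ)).eval s
      = MvPolynomial.aeval ![s, u + l * s] Δ := by
  intro s
  have h := AlgHom.congr_fun
    (MvPolynomial.comp_aeval (R := ℤ)
      ![(Polynomial.X : ℝ[X]), Polynomial.C u + Polynomial.C l * Polynomial.X]
      ((Polynomial.aeval s : ℝ[X] →ₐ[ℝ] ℝ).restrictScalars ℤ)) Δ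
  simp only [AlgHom.coe_comp, Function.comp_apply, AlgHom.restrictScalars_apply,
    Polynomial.coe_aeval_eq_eval] at h
  have hv : (fun i => Polynomial.eval s
      (![(Polynomial.X : ℝ[X]), Polynomial.C u + Polynomial.C l * Polynomial.X] i)) = ![s, u + l * s] := by
    funext i; fin_cases i <;> simp
  rw [h, hv]

lemma shear_coeff (Δ : MvPolynomial (Fin 2) ℤ) (d : ℕ) (hhom : Δ.IsHomogeneous d) (l u : ℝ) :
    (MvPolynomial.aeval
        ![(Polynomial.X : ℝ[X]), Polynomial.C u + Polynomial.C l * Polynomial.X] Δ).natDegree ≤ d ∧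
    (MvPolynomial.aeval
        ![(Polynomial.X : ℝ[X]), Polynomial.C u + Polynomial.C l * Polynomial.X] Δ).coeff d
      = MvPolynomial.aeval ![(1:ℝ), l] Δ := by
  classical
  set B : ℝ[X] := Polynomial.C u + Polynomial.C l * Polynomial.X with hB
  have hdm : ∀ m ∈ Δ.support, m 0 + m 1 = d := by
    intro m hm
    have := hhom (MvPolynomial.mem_support_iff.mp hm)
    simpa [Finsupp.weight, Finsupp.linearCombination, Finsupp.sum_fintype, Fin.sum_univ_two]
      using this
  have hexp : (MvPolynomial.aeval ![(Polynomial.X : ℝ[X]), B] Δ)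
      = ∑ m ∈ Δ.support, Polynomial.C ((MvPolynomial.coeff m Δ : ℤ) : ℝ) *
          (Polynomial.X ^ m 0 * B ^ m 1) := by
    rw [MvPolynomial.aeval_def, MvPolynomial.eval₂_eq']
    refine Finset.sum_congr rfl fun m hm => ?_
    rw [Fin.prod_univ_two]
    norm_cast
  constructor
  · rw [hexp]
    refine Polynomial.natDegree_sum_le_of_forall_le _ _ fun m hm => ?_
    calc (Polynomial.C ((MvPolynomial.coeff m Δ : ℤ) : ℝ) *
          (Polynomial.X ^ m 0 * B ^ m 1)).natDegree
        ≤ (Polynomial.C ((MvPolynomial.coeff m Δ : ℤ) : ℝ)).natDegree +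
          (Polynomial.X ^ m 0 * B ^ m 1).natDegree := Polynomial.natDegree_mul_le
      _ ≤ 0 + ((Polynomial.X ^ m 0 : ℝ[X]).natDegree + (B ^ m 1).natDegree) := by
          gcongr
          · exact le_of_eq (Polynomial.natDegree_C _)
          · exact Polynomial.natDegree_mul_le
      _ ≤ 0 + (m 0 + m 1) := by
          gcongr
          · exact le_of_eq (Polynomial.natDegree_X_pow _)
          · exact (top_coeff_pow u l (m 1)).2
      _ = d := by rw [zero_add, hdm m hm]
  · have haev : (MvPolynomial.aeval ![(1:ℝ), l] Δ)
        = ∑ m ∈ Δ.support, ((MvPolynomial.coeff m Δ : ℤ) : ℝ) * l ^ m 1 := by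
      rw [MvPolynomial.aeval_def, MvPolynomial.eval₂_eq']
      refine Finset.sum_congr rfl fun m hm => ?_
      rw [Fin.prod_univ_two]
      norm_cast
      simp
    rw [hexp, haev, Polynomial.finset_sum_coeff]
    refine Finset.sum_congr rfl fun m hm => ?_
    rw [Polynomial.coeff_C_mul]
    congr 1
    have h1 : d = m 1 + m 0 := by rw [Nat.add_comm]; exact (hdm m hm).symm
    rw [h1, Polynomial.coeff_X_pow_mul]
    exact (top_coeff_pow u l (m 1)).1

lemma exists_shear (Δ : MvPolynomial (Fin 2) ℤ) (d : ℕ) (hhom : Δ.IsHomogeneous d)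
    (hΔ : Δ ≠ 0) : ∃ l : ℝ, (MvPolynomial.aeval ![(1:ℝ), l] Δ : ℝ) ≠ 0 := by
  classical
  set R : ℝ[X] := MvPolynomial.aeval ![(1 : ℝ[X]), Polynomial.X] Δ with hR
  have hdm : ∀ m ∈ Δ.support, m 0 + m 1 = d := by
    intro m hm
    have := hhom (MvPolynomial.mem_support_iff.mp hm)
    simpa [Finsupp.weight, Finsupp.linearCombination, Finsupp.sum_fintype, Fin.sum_univ_two]
      using this
  have hexp : R = ∑ m ∈ Δ.support,
      Polynomial.C ((MvPolynomial.coeff m Δ : ℤ) : ℝ) * Polynomial.X ^ m 1 := by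
    rw [hR, MvPolynomial.aeval_def, MvPolynomial.eval₂_eq']
    refine Finset.sum_congr rfl fun m hm => ?_
    rw [Fin.prod_univ_two]
    norm_cast
    simp
  -- R ≠ 0
  obtain ⟨m₀, hm₀⟩ : ∃ m, m ∈ Δ.support := by
    by_contra h
    push_neg at h
    exact hΔ (MvPolynomial.support_eq_empty.mp (Finset.eq_empty_iff_forall_notMem.mpr h))
  have hcoeff : R.coeff (m₀ 1) = ((MvPolynomial.coeff m₀ Δ : ℤ) : ℝ) := by
    rw [hexp, Polynomial.finset_sum_coeff]
    rw [Finset.sum_eq_single_of_mem m₀ hm₀]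
    · simp
    · intro m hm hne
      have : m 1 ≠ m₀ 1 := by
        intro he
        apply hne
        have h0 : m 0 = m₀ 0 := by
          have := hdm m hm
          have := hdm m₀ hm₀
          omega
        ext i
        fin_cases i
        · exact h0
        · exact he
      rw [Polynomial.coeff_C_mul, Polynomial.coeff_X_pow, if_neg (fun he => this he.symm), mul_zero]
  have hR0 : R ≠ 0 := by
    intro h
    have : ((MvPolynomial.coeff m₀ Δ : ℤ) : ℝ) = 0 := by rw [← hcoeff, h, Polynomial.coeff_zero]
    exact MvPolynomial.mem_support_iff.mp hm₀ (by exact_mod_cast this)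
  -- pick l not a root
  obtain ⟨l, hl⟩ : ∃ l : ℝ, R.eval l ≠ 0 :=
    R.exists_eval_ne_zero_of_natDegree_lt_card hR0
      ((Cardinal.nat_lt_aleph0 _).trans_le (Cardinal.aleph0_le_mk ℝ))
  refine ⟨l, ?_⟩
  have h := AlgHom.congr_fun
    (MvPolynomial.comp_aeval (R := ℤ) ![(1 : ℝ[X]), Polynomial.X]
      ((Polynomial.aeval l : ℝ[X] →ₐ[ℝ] ℝ).restrictScalars ℤ)) Δ
  simp only [AlgHom.coe_comp, Function.comp_apply, AlgHom.restrictScalars_apply,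
    Polynomial.coe_aeval_eq_eval] at h
  have hv : (fun i => Polynomial.eval l (![(1 : ℝ[X]), Polynomial.X] i)) = ![(1:ℝ), l] := by
    funext i; fin_cases i <;> simp
  rw [hv] at h
  rw [← h, ← hR]
  exact hl

/-- For a separable binary form `Δ` of degree `d ≥ 1` and a bounded
region `ℛ ⊂ ℝ²`, the volume of the subset of `Bℛ` where `|Δ(s,t)| < m·B^{d/2}` is
at most `C·m·B^{3/2}` for all `B ≥ 2`, `m ≥ 1`. -/
theorem volume_small_form_values (Δ : MvPolynomial (Fin 2) ℤ) (d : ℕ) (hd : 1 ≤ d)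
    (hhom : Δ.IsHomogeneous d)
    (hsep : Squarefree (MvPolynomial.map (Int.castRingHom ℚ) Δ))
    (ℛ : Set (ℝ × ℝ)) (hℛ : Bornology.IsBounded ℛ) :
    ∃ C : ℝ, 0 < C ∧ ∀ B m : ℝ, 2 ≤ B → 1 ≤ m →
      MeasureTheory.volume {x : ℝ × ℝ | x ∈ B • ℛ ∧
          |(MvPolynomial.aeval ![x.1, x.2] Δ : ℝ)| < m * B ^ ((d : ℝ) / 2)}
        ≤ ENNReal.ofReal (C * m * B ^ ((3 : ℝ) / 2)) := by
  have hΔ0 : Δ ≠ 0 := by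
    intro h
    exact hsep.ne_zero (by rw [h, map_zero])
  obtain ⟨l, ha⟩ := exists_shear Δ d hhom hΔ0
  set a : ℝ := MvPolynomial.aeval ![(1:ℝ), l] Δ with ha_def
  obtain ⟨K₀, hK₀⟩ := hℛ.subset_closedBall 0
  set K : ℝ := max 1 K₀ with hK_def
  have hK1 : (1:ℝ) ≤ K := le_max_left _ _
  have hℛK : ℛ ⊆ closedBall 0 K := hK₀.trans (closedBall_subset_closedBall (le_max_right _ _))
  set A : ℝ := max 1 |a|⁻¹ with hA_def
  have hA1 : (1:ℝ) ≤ A := le_max_left _ _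
  refine ⟨4 * d * (1 + |l|) * K * A, by positivity, ?_⟩
  intro B m hB hm
  have hB0 : (0:ℝ) < B := by linarith
  have hm0 : (0:ℝ) < m := by linarith
  set Z : ℝ := m * B ^ ((d : ℝ) / 2) with hZ_def
  have hZ : 0 < Z := by
    have := Real.rpow_pos_of_pos hB0 ((d : ℝ) / 2)
    positivity
  set M : ℝ := (1 + |l|) * K * B with hM_def
  have hM0 : 0 < M := by positivity
  set G : ℝ × ℝ → ℝ := fun y => MvPolynomial.aeval ![y.1, y.2 + l * y.1] Δ with hG_def
  have hGcont : Continuous G :=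
    cont_aeval2 Δ continuous_fst (continuous_snd.add (continuous_const.mul continuous_fst))
  set E : Set (ℝ × ℝ) := {y | |y.1| ≤ M ∧ |y.2| ≤ M ∧ |G y| < Z} with hE_def
  have hE : MeasurableSet E := by
    refine MeasurableSet.inter ?_ (MeasurableSet.inter ?_ ?_)
    · exact measurableSet_le (measurable_fst.abs) measurable_const
    · exact measurableSet_le (measurable_snd.abs) measurable_const
    · exact measurableSet_lt (hGcont.measurable.abs) measurable_const
  -- the inverse shear
  set finv : ℝ × ℝ → ℝ × ℝ := fun x => (x.1, x.2 - l * x.1) with hfinv_def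
  have hsub : {x : ℝ × ℝ | x ∈ B • ℛ ∧
      |(MvPolynomial.aeval ![x.1, x.2] Δ : ℝ)| < m * B ^ ((d : ℝ) / 2)} ⊆ finv ⁻¹' E := by
    intro x hx
    obtain ⟨hxmem, hxval⟩ := hx
    obtain ⟨y, hy, hxy⟩ := Set.mem_smul_set.mp hxmem
    have hyn : ‖y‖ ≤ K := by
      have := hℛK hy
      simpa [mem_closedBall, dist_zero_right] using this
    have hy1 : |y.1| ≤ K := by
      have := (norm_fst_le y).trans hyn
      simpa [Real.norm_eq_abs] using this
    have hy2 : |y.2| ≤ K := by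
      have := (norm_snd_le y).trans hyn
      simpa [Real.norm_eq_abs] using this
    have hx1 : x.1 = B * y.1 := by rw [← hxy]; simp [smul_eq_mul]
    have hx2 : x.2 = B * y.2 := by rw [← hxy]; simp [smul_eq_mul]
    have hax1 : |x.1| ≤ K * B := by
      rw [hx1, abs_mul, abs_of_pos hB0]
      calc B * |y.1| ≤ B * K := by gcongr
        _ = K * B := mul_comm _ _
    have hax2 : |x.2| ≤ K * B := by
      rw [hx2, abs_mul, abs_of_pos hB0]
      calc B * |y.2| ≤ B * K := by gcongr
        _ = K * B := mul_comm _ _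
    have hKBM : K * B ≤ M := by
      rw [hM_def]
      nlinarith [abs_nonneg l, hK1, hB0]
    refine ⟨hax1.trans hKBM, ?_, ?_⟩
    · calc |x.2 - l * x.1| ≤ |x.2| + |l * x.1| := abs_sub _ _
        _ ≤ K * B + |l| * (K * B) := by
            rw [abs_mul]; gcongr
        _ = (1 + |l|) * K * B := by ring
        _ = M := rfl
    · show |G (x.1, x.2 - l * x.1)| < Z
      rw [hG_def]
      simp only
      rw [sub_add_cancel]
      exact hxval
  -- measure preserving inverse shear
  have hMP : MeasurePreserving finv (volume : Measure (ℝ × ℝ)) volume := by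
    rw [MeasureTheory.Measure.volume_eq_prod]
    have := MeasureTheory.MeasurePreserving.skew_product (μa := (volume : Measure ℝ))
      (μb := (volume : Measure ℝ)) (μc := (volume : Measure ℝ)) (μd := (volume : Measure ℝ))
      (f := id) (MeasurePreserving.id _) (g := fun s u => u - l * s)
      (by
        apply Measurable.sub
        · exact measurable_snd
        · exact measurable_const.mul measurable_fst)
      (Filter.Eventually.of_forall fun s => by
        show Measure.map (fun u : ℝ => u - l * s) volume = volume
        have : (fun u : ℝ => u - l * s) = fun u => u + (-(l * s)) := by
          funext u; ring
        rw [this]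
        exact (measurePreserving_add_right volume (-(l * s))).map_eq)
    exact this
  have hvol_eq : volume (finv ⁻¹' E) = volume E := hMP.measure_preimage hE.nullMeasurableSet
  -- Fubini
  have hfub : volume E = ∫⁻ u : ℝ, volume ((fun s => (s, u)) ⁻¹' E) := by
    rw [MeasureTheory.Measure.volume_eq_prod]
    exact MeasureTheory.Measure.prod_apply_symm hE
  -- slice bound
  set r : ℝ := (Z / |a|) ^ ((1:ℝ)/d) with hr_def
  have hslice : ∀ u : ℝ, volume ((fun s => (s, u)) ⁻¹' E) ≤
      Set.indicator (Icc (-M) M) (fun _ => (d : ENNReal) * ENNReal.ofReal (2 * r)) u := by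
    intro u
    by_cases hu : |u| ≤ M
    · have huI : u ∈ Icc (-M) M := by
        rw [mem_Icc]; constructor <;> [linarith [abs_le.mp hu] ; linarith [abs_le.mp hu]]
      rw [Set.indicator_of_mem huI]
      set q : ℝ[X] := MvPolynomial.aeval
        ![(Polynomial.X : ℝ[X]), Polynomial.C u + Polynomial.C l * Polynomial.X] Δ with hq_def
      have hq := shear_coeff Δ d hhom l u
      have hqc : q.coeff d = a := hq.2
      have hqc0 : q.coeff d ≠ 0 := by rw [hqc]; exact ha
      have hsub2 : ((fun s => (s, u)) ⁻¹' E) ⊆ {s : ℝ | |q.eval s| < Z} := by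
        intro s hs
        obtain ⟨-, -, h3⟩ := hs
        show |q.eval s| < Z
        rw [shear_poly Δ l u s]
        exact h3
      calc volume ((fun s => (s, u)) ⁻¹' E) ≤ volume {s : ℝ | |q.eval s| < Z} :=
            measure_mono hsub2
        _ ≤ (d : ENNReal) * ENNReal.ofReal (2 * (Z / |q.coeff d|) ^ ((1:ℝ)/d)) :=
            slice_vol q d hd hq.1 hqc0 Z hZ
        _ = (d : ENNReal) * ENNReal.ofReal (2 * r) := by rw [hqc]
    · have hempty : ((fun s => (s, u)) ⁻¹' E) = ∅ := by
        ext s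
        simp only [mem_preimage, mem_empty_iff_false, iff_false]
        intro hs
        exact hu hs.2.1
      rw [hempty]
      simp
  -- put it together
  have hint : (∫⁻ u : ℝ, Set.indicator (Icc (-M) M)
      (fun _ => (d : ENNReal) * ENNReal.ofReal (2 * r)) u) =
      ((d : ENNReal) * ENNReal.ofReal (2 * r)) * ENNReal.ofReal (2 * M) := by
    rw [MeasureTheory.lintegral_indicator_const measurableSet_Icc, Real.volume_Icc]
    congr 1
    congr 1
    ring
  -- final real inequality
  have hrnn : 0 ≤ r := Real.rpow_nonneg (by positivity) _
  have hB12 : (0:ℝ) ≤ B ^ ((1:ℝ)/2) := Real.rpow_nonneg hB0.le _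
  have hrle : r ≤ A * m * B ^ ((1:ℝ)/2) := by
    have hd0 : (0:ℝ) < (d:ℝ) := by exact_mod_cast hd
    have h1 : r = Z ^ ((1:ℝ)/d) * (|a|⁻¹) ^ ((1:ℝ)/d) := by
      rw [hr_def, div_eq_mul_inv, Real.mul_rpow hZ.le (inv_nonneg.mpr (abs_nonneg a))]
    have h2 : Z ^ ((1:ℝ)/d) = m ^ ((1:ℝ)/d) * B ^ ((1:ℝ)/2) := by
      have hdne : (d:ℝ) ≠ 0 := hd0.ne'
      have hdd : (d:ℝ)/2 * (1/(d:ℝ)) = 1/2 := by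
        field_simp
      rw [hZ_def, Real.mul_rpow hm0.le (Real.rpow_nonneg hB0.le _), ← Real.rpow_mul hB0.le, hdd]
    have h3 : m ^ ((1:ℝ)/d) ≤ m := by
      calc m ^ ((1:ℝ)/d) ≤ m ^ (1:ℝ) := by
            refine Real.rpow_le_rpow_of_exponent_le hm ?_
            rw [div_le_one hd0]
            exact_mod_cast hd
        _ = m := Real.rpow_one m
    have h4 : (|a|⁻¹) ^ ((1:ℝ)/d) ≤ A := by
      rcases le_total (|a|⁻¹) 1 with h | h
      · calc (|a|⁻¹) ^ ((1:ℝ)/d) ≤ 1 :=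
              Real.rpow_le_one (by positivity) h (by positivity)
          _ ≤ A := hA1
      · calc (|a|⁻¹) ^ ((1:ℝ)/d) ≤ (|a|⁻¹) ^ (1:ℝ) := by
              refine Real.rpow_le_rpow_of_exponent_le h ?_
              rw [div_le_one hd0]
              exact_mod_cast hd
          _ = |a|⁻¹ := Real.rpow_one _
          _ ≤ A := le_max_right _ _
    calc r = m ^ ((1:ℝ)/d) * B ^ ((1:ℝ)/2) * (|a|⁻¹) ^ ((1:ℝ)/d) := by rw [h1, h2]
      _ ≤ m * B ^ ((1:ℝ)/2) * A := by
          gcongr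
      _ = A * m * B ^ ((1:ℝ)/2) := by ring
  have hBB : B ^ ((1:ℝ)/2) * B = B ^ ((3:ℝ)/2) := by
    rw [show ((3:ℝ)/2) = (1:ℝ)/2 + 1 by norm_num, Real.rpow_add hB0, Real.rpow_one]
  have hreal : (d:ℝ) * (2 * r) * (2 * M) ≤ 4 * d * (1 + |l|) * K * A * m * B ^ ((3:ℝ)/2) := by
    calc (d:ℝ) * (2 * r) * (2 * M) = (4 * (d:ℝ) * (1 + |l|) * K) * r * B := by
          rw [hM_def]; ring
      _ ≤ (4 * (d:ℝ) * (1 + |l|) * K) * (A * m * B ^ ((1:ℝ)/2)) * B := by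
          gcongr
      _ = (4 * (d:ℝ) * (1 + |l|) * K * A) * m * (B ^ ((1:ℝ)/2) * B) := by ring
      _ = 4 * (d:ℝ) * (1 + |l|) * K * A * m * B ^ ((3:ℝ)/2) := by rw [hBB]
  calc volume {x : ℝ × ℝ | x ∈ B • ℛ ∧
        |(MvPolynomial.aeval ![x.1, x.2] Δ : ℝ)| < m * B ^ ((d : ℝ) / 2)}
      ≤ volume (finv ⁻¹' E) := measure_mono hsub
    _ = volume E := hvol_eq
    _ = ∫⁻ u : ℝ, volume ((fun s => (s, u)) ⁻¹' E) := hfub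
    _ ≤ ∫⁻ u : ℝ, Set.indicator (Icc (-M) M)
          (fun _ => (d : ENNReal) * ENNReal.ofReal (2 * r)) u := lintegral_mono hslice
    _ = ((d : ENNReal) * ENNReal.ofReal (2 * r)) * ENNReal.ofReal (2 * M) := hint
    _ ≤ ENNReal.ofReal (4 * d * (1 + |l|) * K * A * m * B ^ ((3:ℝ)/2)) := by
        rw [← ENNReal.ofReal_natCast d, ← ENNReal.ofReal_mul (by positivity),
          ← ENNReal.ofReal_mul (by positivity)]
        exact ENNReal.ofReal_le_ofReal hreal
end
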